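/- Let X and Y be finite-dimensional Banach spaces. Then every element of X ⊗π Y attains its projective norm; that is, NAπ(X ⊗π Y) = X ⊗π Y. -/

import Mathlib

noncomputable section

open scoped BigOperators

/-- The predicate stating that the Banach space `Z`, together with the bounded bilinear map
`t : X → Y → Z` and the correspondence `lift` between operators `X → Y*` and functionals on `Z`,
realizes the projective tensor product `X ⊗π Y`.  The field `norm_eq_sInf` says that the norm of
`Z` is the projective norm: `‖z‖π = inf {∑ₙ ‖xₙ‖‖yₙ‖ : z = ∑ₙ xₙ ⊗ yₙ}`, and the `lift` fields
encode the canonical isometric identification `(X ⊗π Y)* = L(X, Y*)`. -/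
structure IsProjTensorProduct (X Y Z : Type*)
    [NormedAddCommGroup X] [NormedSpace ℝ X]
    [NormedAddCommGroup Y] [NormedSpace ℝ Y]
    [NormedAddCommGroup Z] [NormedSpace ℝ Z]
    (t : X →L[ℝ] Y →L[ℝ] Z)
    (lift : (X →L[ℝ] (Y →L[ℝ] ℝ)) → (Z →L[ℝ] ℝ)) : Prop where
  norm_tmul_le : ∀ (x : X) (y : Y), ‖t x y‖ ≤ ‖x‖ * ‖y‖
  exists_rep : ∀ z : Z, ∃ (x : ℕ → X) (y : ℕ → Y),
    Summable (fun n => ‖x n‖ * ‖y n‖) ∧ HasSum (fun n => t (x n) (y n)) z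
  norm_eq_sInf : ∀ z : Z, ‖z‖ = sInf {r : ℝ | ∃ (x : ℕ → X) (y : ℕ → Y),
    Summable (fun n => ‖x n‖ * ‖y n‖) ∧ HasSum (fun n => t (x n) (y n)) z ∧
    r = ∑' n, ‖x n‖ * ‖y n‖}
  lift_tmul : ∀ (G : X →L[ℝ] (Y →L[ℝ] ℝ)) (x : X) (y : Y), lift G (t x y) = G x y
  norm_lift : ∀ G : X →L[ℝ] (Y →L[ℝ] ℝ), ‖lift G‖ = ‖G‖
  lift_surjective : Function.Surjective lift

/-- An element `z ∈ X ⊗π Y` attains its projective norm if it admits a representation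
`z = ∑ₙ xₙ ⊗ yₙ` with `∑ₙ ‖xₙ‖‖yₙ‖ < ∞` and `‖z‖π = ∑ₙ ‖xₙ‖‖yₙ‖`. -/
def AttainsProjNorm {X Y Z : Type*}
    [NormedAddCommGroup X] [NormedSpace ℝ X]
    [NormedAddCommGroup Y] [NormedSpace ℝ Y]
    [NormedAddCommGroup Z] [NormedSpace ℝ Z]
    (t : X →L[ℝ] Y →L[ℝ] Z) (z : Z) : Prop :=
  ∃ (x : ℕ → X) (y : ℕ → Y),
    Summable (fun n => ‖x n‖ * ‖y n‖) ∧ HasSum (fun n => t (x n) (y n)) z ∧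
    ‖z‖ = ∑' n, ‖x n‖ * ‖y n‖

/-- Padding a sum over `Fin c` to a sum over `Fin m`. -/
lemma aux_pad_sum {M : Type*} [AddCommMonoid M] {c m : ℕ} (hc : c ≤ m) (f : Fin c → M) :
    (∑ j : Fin m, if h : (j : ℕ) < c then f ⟨j, h⟩ else 0) = ∑ j : Fin c, f j := by
  rw [Fin.sum_univ_eq_sum_range (fun n => if h : n < c then f ⟨n, h⟩ else 0) m]
  rw [← Finset.sum_subset (Finset.range_subset_range.mpr hc)
    (fun x _ hx => by
      rw [Finset.mem_range, not_lt] at hx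
      exact dif_neg (by omega))]
  rw [← Fin.sum_univ_eq_sum_range (fun n => if h : n < c then f ⟨n, h⟩ else 0) c]
  refine Finset.sum_congr rfl fun j _ => ?_
  rw [dif_pos j.2]

/-- Carathéodory description of the convex hull in a finite-dimensional space, as the image of
a compact parameter space. -/
lemma aux_convexHull_eq_image {Z : Type*} [NormedAddCommGroup Z] [NormedSpace ℝ Z]
    [FiniteDimensional ℝ Z] (K : Set Z) :
    convexHull ℝ K =
      (fun p : (Fin (Module.finrank ℝ Z + 1) → ℝ) × (Fin (Module.finrank ℝ Z + 1) → Z) =>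
          ∑ i, p.1 i • p.2 i) ''
        ((stdSimplex ℝ (Fin (Module.finrank ℝ Z + 1))) ×ˢ
          Set.univ.pi fun _ => K) := by
  set m := Module.finrank ℝ Z + 1 with hm
  apply Set.Subset.antisymm
  · intro x hx
    obtain ⟨ι, hfin, zf, w, hrange, hai, hpos, hsum, hcomb⟩ :=
      eq_pos_convex_span_of_mem_convexHull hx
    letI := hfin
    have hne : Nonempty ι := by
      by_contra hni
      rw [not_nonempty_iff] at hni
      simp at hsum
    have hc : Fintype.card ι ≤ m := by
      refine hai.card_le_finrank_succ.trans ?_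
      have := Submodule.finrank_le (vectorSpan ℝ (Set.range zf))
      omega
    set c := Fintype.card ι with hcdef
    let e : Fin c ≃ ι := (Fintype.equivFin ι).symm
    let i0 : ι := Classical.arbitrary ι
    refine ⟨(fun j => if h : (j : ℕ) < c then w (e ⟨j, h⟩) else 0,
             fun j => if h : (j : ℕ) < c then zf (e ⟨j, h⟩) else zf i0), ⟨?_, ?_⟩, ?_⟩
    · constructor
      · intro j
        by_cases h : (j : ℕ) < c
        · simpa [h] using (hpos (e ⟨j, h⟩)).le
        · simp [h]
      · rw [aux_pad_sum hc (fun j => w (e j))]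
        rw [Equiv.sum_comp e w]
        exact hsum
    · intro j _
      by_cases h : (j : ℕ) < c
      · simpa [h] using hrange ⟨e ⟨j, h⟩, rfl⟩
      · simpa [h] using hrange ⟨i0, rfl⟩
    · have hpt : ∀ j : Fin m,
          (if h : (j : ℕ) < c then w (e ⟨j, h⟩) else 0) •
            (if h : (j : ℕ) < c then zf (e ⟨j, h⟩) else zf i0) =
          (if h : (j : ℕ) < c then w (e ⟨j, h⟩) • zf (e ⟨j, h⟩) else 0) := by
        intro j
        by_cases h : (j : ℕ) < c <;> simp [h]
      simp only [hpt]
      rw [aux_pad_sum hc (fun j => w (e j) • zf (e j))]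
      rw [Equiv.sum_comp e (fun i => w i • zf i)]
      exact hcomb
  · rintro x ⟨⟨w, p⟩, ⟨hw, hp⟩, rfl⟩
    exact (convex_convexHull ℝ K).sum_mem (fun i _ => hw.1 i) hw.2
      fun i _ => subset_convexHull ℝ K (hp i (Set.mem_univ i))

/-- A convex set containing `0` is closed under subconvex combinations. -/
lemma aux_sum_mem_of_sum_le_one {Z : Type*} [AddCommGroup Z] [Module ℝ Z]
    {C : Set Z} (hC : Convex ℝ C) (h0 : (0 : Z) ∈ C) (F : Finset ℕ) (w : ℕ → ℝ) (p : ℕ → Z)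
    (hw : ∀ n ∈ F, 0 ≤ w n) (hp : ∀ n ∈ F, p n ∈ C) (hs : ∑ n ∈ F, w n ≤ 1) :
    (∑ n ∈ F, w n • p n) ∈ C := by
  by_cases hW : ∑ n ∈ F, w n = 0
  · have : ∀ n ∈ F, w n = 0 := (Finset.sum_eq_zero_iff_of_nonneg hw).mp hW
    have : ∑ n ∈ F, w n • p n = 0 := Finset.sum_eq_zero fun n hn => by
      rw [this n hn, zero_smul]
    rw [this]; exact h0
  · have hWpos : 0 < ∑ n ∈ F, w n :=
      lt_of_le_of_ne (Finset.sum_nonneg hw) (Ne.symm hW)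
    have hcm : F.centerMass w p ∈ C := hC.centerMass_mem hw hWpos hp
    have heq : ∑ n ∈ F, w n • p n = (∑ n ∈ F, w n) • F.centerMass w p := by
      rw [Finset.centerMass, smul_smul, mul_inv_cancel₀ hW, one_smul]
    rw [heq]
    have := hC hcm h0 hWpos.le (by linarith : (0:ℝ) ≤ 1 - ∑ n ∈ F, w n) (by ring)
    simpa using this

/-- The target space of a projective tensor product of finite-dimensional spaces is
finite-dimensional. -/
lemma aux_finiteDimensional
    {X Y Z : Type*} [NormedAddCommGroup X] [NormedSpace ℝ X] [FiniteDimensional ℝ X]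
    [NormedAddCommGroup Y] [NormedSpace ℝ Y] [FiniteDimensional ℝ Y]
    [NormedAddCommGroup Z] [NormedSpace ℝ Z]
    (t : X →L[ℝ] Y →L[ℝ] Z) {lift : (X →L[ℝ] (Y →L[ℝ] ℝ)) → (Z →L[ℝ] ℝ)}
    (h : IsProjTensorProduct X Y Z t lift) : FiniteDimensional ℝ Z := by
  classical
  let b := Module.finBasis ℝ X
  let c := Module.finBasis ℝ Y
  let S : Submodule ℝ Z :=
    Submodule.span ℝ (Set.range fun p : Fin (Module.finrank ℝ X) × Fin (Module.finrank ℝ Y) =>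
      t (b p.1) (c p.2))
  haveI hSfin : FiniteDimensional ℝ S :=
    FiniteDimensional.span_of_finite ℝ (Set.finite_range _)
  have hmemt : ∀ (x : X) (y : Y), t x y ∈ S := by
    intro x y
    have hxy : t x y = ∑ j, ∑ i, (c.repr y j * b.repr x i) • t (b i) (c j) := by
      conv_lhs => rw [← b.sum_repr x, ← c.sum_repr y]
      rw [map_sum]
      refine Finset.sum_congr rfl fun j _ => ?_
      rw [map_smul, map_sum, ContinuousLinearMap.sum_apply, Finset.smul_sum]
      refine Finset.sum_congr rfl fun i _ => ?_
      rw [map_smul, ContinuousLinearMap.smul_apply, smul_smul]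
    rw [hxy]
    exact Submodule.sum_mem _ fun j _ => Submodule.sum_mem _ fun i _ =>
      Submodule.smul_mem _ _ (Submodule.subset_span ⟨(i, j), rfl⟩)
  have hS : S = ⊤ := by
    rw [Submodule.eq_top_iff']
    intro z
    obtain ⟨x, y, _, hhas⟩ := h.exists_rep z
    have hcl : IsClosed (S : Set Z) := S.closed_of_finiteDimensional
    exact hcl.mem_of_tendsto hhas
      (Filter.Eventually.of_forall fun F => Submodule.sum_mem _ fun n _ => hmemt _ _)
  have : FiniteDimensional ℝ (⊤ : Submodule ℝ Z) := hS ▸ hSfin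
  exact (Submodule.topEquiv (R := ℝ) (M := Z)).finiteDimensional

/-- If `X` and `Y` are finite dimensional Banach spaces then every element
of `X ⊗π Y` attains its projective norm. -/
theorem attainsProjNorm_of_finiteDimensional
    {X Y Z : Type*} [NormedAddCommGroup X] [NormedSpace ℝ X] [FiniteDimensional ℝ X]
    [NormedAddCommGroup Y] [NormedSpace ℝ Y] [FiniteDimensional ℝ Y]
    [NormedAddCommGroup Z] [NormedSpace ℝ Z] [CompleteSpace Z]
    (t : X →L[ℝ] Y →L[ℝ] Z) (lift : (X →L[ℝ] (Y →L[ℝ] ℝ)) → (Z →L[ℝ] ℝ))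
    (h : IsProjTensorProduct X Y Z t lift) :
    ∀ z : Z, AttainsProjNorm t z := by
  classical
  haveI finZ : FiniteDimensional ℝ Z := aux_finiteDimensional t h
  intro z
  by_cases hz0 : z = 0
  · refine ⟨fun _ => 0, fun _ => 0, by simpa using summable_zero, ?_, by simp [hz0]⟩
    simpa [hz0] using hasSum_zero (α := Z) (β := ℕ)
  have hznorm : (0 : ℝ) < ‖z‖ := norm_pos_iff.mpr hz0
  -- The compact set of elementary tensors with factors in the unit balls.
  set K : Set Z :=
    (fun p : X × Y => t p.1 p.2) '' (Metric.closedBall 0 1 ×ˢ Metric.closedBall 0 1) with hK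
  have hKcomp : IsCompact K := by
    refine (((isCompact_closedBall (0 : X) 1).prod (isCompact_closedBall (0 : Y) 1))).image ?_
    exact (t.continuous.comp continuous_fst).clm_apply continuous_snd
  have h0K : (0 : Z) ∈ K := ⟨(0, 0), by simp, by simp⟩
  have hCHcomp : IsCompact (convexHull ℝ K) := by
    rw [aux_convexHull_eq_image K]
    refine ((isCompact_stdSimplex _ _).prod (isCompact_univ_pi fun _ => hKcomp)).image ?_
    refine continuous_finset_sum _ fun i _ => ?_
    exact ((continuous_apply i).comp continuous_fst).smul
      ((continuous_apply i).comp continuous_snd)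
  have hCHclosed : IsClosed (convexHull ℝ K) := hCHcomp.isClosed
  -- Key step: `s⁻¹ • z ∈ convexHull ℝ K` for every `s > ‖z‖`.
  have key : ∀ s : ℝ, ‖z‖ < s → s⁻¹ • z ∈ convexHull ℝ K := by
    intro s hs
    have hspos : 0 < s := hznorm.trans hs
    have hset : ({r : ℝ | ∃ (x : ℕ → X) (y : ℕ → Y),
        Summable (fun n => ‖x n‖ * ‖y n‖) ∧ HasSum (fun n => t (x n) (y n)) z ∧
        r = ∑' n, ‖x n‖ * ‖y n‖}).Nonempty := by
      obtain ⟨x, y, h1, h2⟩ := h.exists_rep z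
      exact ⟨_, x, y, h1, h2, rfl⟩
    have hlt : sInf {r : ℝ | ∃ (x : ℕ → X) (y : ℕ → Y),
        Summable (fun n => ‖x n‖ * ‖y n‖) ∧ HasSum (fun n => t (x n) (y n)) z ∧
        r = ∑' n, ‖x n‖ * ‖y n‖} < s := by
      rw [← h.norm_eq_sInf z]; exact hs
    obtain ⟨r, ⟨x, y, hsum, hhas, hr⟩, hrs⟩ := exists_lt_of_csInf_lt hset hlt
    have hTlt : ∑' n, ‖x n‖ * ‖y n‖ < s := hr ▸ hrs
    set a : ℕ → ℝ := fun n => ‖x n‖ * ‖y n‖ with ha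
    have hanonneg : ∀ n, 0 ≤ a n := fun n => mul_nonneg (norm_nonneg _) (norm_nonneg _)
    set pts : ℕ → Z := fun n =>
      if a n = 0 then 0 else t ((‖x n‖)⁻¹ • x n) ((‖y n‖)⁻¹ • y n) with hpts
    have hptsK : ∀ n, pts n ∈ K := by
      intro n
      by_cases hn : a n = 0
      · simpa [hpts, hn] using h0K
      · have hxne : ‖x n‖ ≠ 0 := fun hh => hn (by simp [ha, hh])
        have hyne : ‖y n‖ ≠ 0 := fun hh => hn (by simp [ha, hh])
        refine (Set.mem_image _ _ _).mpr ⟨((‖x n‖)⁻¹ • x n, (‖y n‖)⁻¹ • y n), ⟨?_, ?_⟩, by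
          simp [hpts, hn]⟩
        · rw [Metric.mem_closedBall, dist_zero_right, norm_smul, Real.norm_eq_abs,
            abs_inv, abs_norm, inv_mul_cancel₀ hxne]
        · rw [Metric.mem_closedBall, dist_zero_right, norm_smul, Real.norm_eq_abs,
            abs_inv, abs_norm, inv_mul_cancel₀ hyne]
    have hterm : ∀ n, (a n / s) • pts n = s⁻¹ • t (x n) (y n) := by
      intro n
      by_cases hn : a n = 0
      · have : t (x n) (y n) = 0 := by
          have hle : ‖t (x n) (y n)‖ ≤ a n := h.norm_tmul_le (x n) (y n)
          rw [hn] at hle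
          exact norm_le_zero_iff.mp hle
        simp [hpts, hn, this]
      · have hxne : ‖x n‖ ≠ 0 := fun hh => hn (by simp [ha, hh])
        have hyne : ‖y n‖ ≠ 0 := fun hh => hn (by simp [ha, hh])
        have : t ((‖x n‖)⁻¹ • x n) ((‖y n‖)⁻¹ • y n)
            = ((‖x n‖)⁻¹ * (‖y n‖)⁻¹) • t (x n) (y n) := by
          rw [map_smul, map_smul, ContinuousLinearMap.smul_apply, smul_smul, mul_comm]
        rw [hpts]
        simp only [hn, if_false, this, smul_smul]
        congr 1
        field_simp [ha]
        ring
    have hmemF : ∀ F : Finset ℕ, (∑ n ∈ F, s⁻¹ • t (x n) (y n)) ∈ convexHull ℝ K := by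
      intro F
      have : (∑ n ∈ F, s⁻¹ • t (x n) (y n)) = ∑ n ∈ F, (a n / s) • pts n :=
        Finset.sum_congr rfl fun n _ => (hterm n).symm
      rw [this]
      refine aux_sum_mem_of_sum_le_one (convex_convexHull ℝ K)
        (subset_convexHull ℝ K h0K) F _ _
        (fun n _ => div_nonneg (hanonneg n) hspos.le)
        (fun n _ => subset_convexHull ℝ K (hptsK n)) ?_
      rw [← Finset.sum_div, div_le_one hspos]
      exact (hsum.sum_le_tsum F (fun n _ => hanonneg n)).trans hTlt.le
    have htend : Filter.Tendsto (fun F : Finset ℕ => ∑ n ∈ F, s⁻¹ • t (x n) (y n))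
        Filter.atTop (nhds (s⁻¹ • z)) := hhas.const_smul s⁻¹
    exact hCHclosed.mem_of_tendsto htend (Filter.Eventually.of_forall hmemF)
  -- Pass to the limit `s → ‖z‖` to get `‖z‖⁻¹ • z ∈ convexHull ℝ K`.
  have hmem : ‖z‖⁻¹ • z ∈ convexHull ℝ K := by
    have h1 : Filter.Tendsto (fun k : ℕ => ‖z‖ + ((k : ℝ) + 1)⁻¹) Filter.atTop (nhds ‖z‖) := by
      have := tendsto_one_div_add_atTop_nhds_zero_nat (𝕜 := ℝ)
      simpa [one_div] using Filter.Tendsto.const_add ‖z‖ this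
    have h2 : Filter.Tendsto (fun k : ℕ => (‖z‖ + ((k : ℝ) + 1)⁻¹)⁻¹ • z)
        Filter.atTop (nhds (‖z‖⁻¹ • z)) :=
      (h1.inv₀ hznorm.ne').smul_const z
    refine hCHclosed.mem_of_tendsto h2 (Filter.Eventually.of_forall fun k => ?_)
    refine key _ ?_
    have : (0 : ℝ) < ((k : ℝ) + 1)⁻¹ := by positivity
    linarith
  -- Extract a finite representation from the Carathéodory description.
  rw [aux_convexHull_eq_image K] at hmem
  obtain ⟨q, ⟨hw, hp⟩, hE0⟩ := hmem
  have hw1 : ∀ j : Fin (Module.finrank ℝ Z + 1), 0 ≤ q.1 j := hw.1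
  have hw2 : ∑ j : Fin (Module.finrank ℝ Z + 1), q.1 j = 1 := hw.2
  have hE : ∑ j : Fin (Module.finrank ℝ Z + 1), q.1 j • q.2 j = ‖z‖⁻¹ • z := hE0
  have hpK : ∀ j : Fin (Module.finrank ℝ Z + 1), q.2 j ∈ K := fun j => hp j (Set.mem_univ j)
  choose pr hpr hpreq0 using fun j => hpK j
  have hpreq : ∀ j : Fin (Module.finrank ℝ Z + 1), t (pr j).1 (pr j).2 = q.2 j := hpreq0
  set X' : ℕ → X := fun n => if hn : n < Module.finrank ℝ Z + 1 then (‖z‖ * q.1 ⟨n, hn⟩) • (pr ⟨n, hn⟩).1 else 0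
    with hX'
  set Y' : ℕ → Y := fun n => if hn : n < Module.finrank ℝ Z + 1 then (pr ⟨n, hn⟩).2 else 0 with hY'
  have hXzero : ∀ n ∉ Finset.range (Module.finrank ℝ Z + 1), ‖X' n‖ * ‖Y' n‖ = 0 := by
    intro n hn
    rw [Finset.mem_range, not_lt] at hn
    simp [hX', dif_neg (by omega : ¬ n < Module.finrank ℝ Z + 1), dif_neg (by omega : ¬ n ≤ Module.finrank ℝ Z)]
  have hTzero : ∀ n ∉ Finset.range (Module.finrank ℝ Z + 1), t (X' n) (Y' n) = 0 := by
    intro n hn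
    rw [Finset.mem_range, not_lt] at hn
    simp [hX', dif_neg (by omega : ¬ n < Module.finrank ℝ Z + 1), dif_neg (by omega : ¬ n ≤ Module.finrank ℝ Z)]
  have hsummable : Summable (fun n => ‖X' n‖ * ‖Y' n‖) :=
    summable_of_ne_finset_zero hXzero
  have hXval : ∀ j : Fin (Module.finrank ℝ Z + 1), X' (j : ℕ) = (‖z‖ * q.1 j) • (pr j).1 := by
    intro j; rw [hX']; simp only [dif_pos j.2, Fin.eta]
  have hYval : ∀ j : Fin (Module.finrank ℝ Z + 1), Y' (j : ℕ) = (pr j).2 := by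
    intro j; rw [hY']; simp only [dif_pos j.2, Fin.eta]
  have haux : ∀ j : Fin (Module.finrank ℝ Z + 1), t (X' (j : ℕ)) (Y' (j : ℕ)) = (‖z‖ * q.1 j) • q.2 j := by
    intro j
    rw [hXval j, hYval j, map_smul, ContinuousLinearMap.smul_apply, hpreq j]
  have hsumz : ∑ n ∈ Finset.range (Module.finrank ℝ Z + 1), t (X' n) (Y' n) = z := by
    rw [← Fin.sum_univ_eq_sum_range (fun n => t (X' n) (Y' n)) (Module.finrank ℝ Z + 1)]
    have e1 : ∑ j : Fin (Module.finrank ℝ Z + 1), t (X' (j : ℕ)) (Y' (j : ℕ)) = ∑ j : Fin (Module.finrank ℝ Z + 1), (‖z‖ * q.1 j) • q.2 j :=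
      Finset.sum_congr rfl fun j _ => haux j
    have e2 : ∑ j : Fin (Module.finrank ℝ Z + 1), (‖z‖ * q.1 j) • q.2 j = ‖z‖ • ∑ j : Fin (Module.finrank ℝ Z + 1), q.1 j • q.2 j := by
      rw [Finset.smul_sum]
      exact Finset.sum_congr rfl fun j _ => by rw [smul_smul]
    rw [e1, e2, hE, smul_inv_smul₀ hznorm.ne']
  have hhasSum : HasSum (fun n => t (X' n) (Y' n)) z := by
    have := hasSum_sum_of_ne_finset_zero (s := Finset.range (Module.finrank ℝ Z + 1))
      (f := fun n => t (X' n) (Y' n)) (L := SummationFilter.unconditional ℕ) hTzero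
    rwa [hsumz] at this
  have htsum : ∑' n, ‖X' n‖ * ‖Y' n‖ = ∑ n ∈ Finset.range (Module.finrank ℝ Z + 1), ‖X' n‖ * ‖Y' n‖ :=
    tsum_eq_sum hXzero
  have hub : ∑' n, ‖X' n‖ * ‖Y' n‖ ≤ ‖z‖ := by
    rw [htsum, ← Fin.sum_univ_eq_sum_range (fun n => ‖X' n‖ * ‖Y' n‖) (Module.finrank ℝ Z + 1)]
    have hbound : ∀ j : Fin (Module.finrank ℝ Z + 1), ‖X' (j : ℕ)‖ * ‖Y' (j : ℕ)‖ ≤ ‖z‖ * q.1 j := by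
      intro j
      have hwj : 0 ≤ q.1 j := hw1 j
      have hprm := hpr j
      rw [Set.mem_prod] at hprm
      have ha1 : ‖(pr j).1‖ ≤ 1 := by
        have := hprm.1; rwa [Metric.mem_closedBall, dist_zero_right] at this
      have hb1 : ‖(pr j).2‖ ≤ 1 := by
        have := hprm.2; rwa [Metric.mem_closedBall, dist_zero_right] at this
      rw [hXval j, hYval j, norm_smul, Real.norm_eq_abs, abs_of_nonneg (by positivity)]
      calc ‖z‖ * q.1 j * ‖(pr j).1‖ * ‖(pr j).2‖
          ≤ ‖z‖ * q.1 j * 1 * 1 := by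
            apply mul_le_mul (mul_le_mul le_rfl ha1 (norm_nonneg _) (by positivity)) hb1
              (norm_nonneg _) (by positivity)
        _ = ‖z‖ * q.1 j := by ring
    calc ∑ j : Fin (Module.finrank ℝ Z + 1), ‖X' (j : ℕ)‖ * ‖Y' (j : ℕ)‖
        ≤ ∑ j : Fin (Module.finrank ℝ Z + 1), ‖z‖ * q.1 j := Finset.sum_le_sum fun j _ => hbound j
      _ = ‖z‖ * ∑ j : Fin (Module.finrank ℝ Z + 1), q.1 j := by rw [Finset.mul_sum]
      _ = ‖z‖ := by rw [hw2, mul_one]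
  have hlb : ‖z‖ ≤ ∑' n, ‖X' n‖ * ‖Y' n‖ := by
    rw [h.norm_eq_sInf z]
    refine csInf_le ⟨0, ?_⟩ ⟨X', Y', hsummable, hhasSum, rfl⟩
    rintro r ⟨x, y, hs1, _, rfl⟩
    exact tsum_nonneg fun n => mul_nonneg (norm_nonneg _) (norm_nonneg _)
  exact ⟨X', Y', hsummable, hhasSum, le_antisymm hlb hub⟩
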